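/- (Forney's theorem, n = 1.) Let G ∈ F[D]^{q×p} be a polynomial matrix with no zero column, a its column degree function, and G^L the matrix whose j-th column is the degree-a(j) leading form of the j-th column of G (equivalently, the leading coefficient matrix times diag(D^{a(j)})). Then G has the predictable degree property (deg(Gf) = max_j (a(j) + deg f_j) for every f ∈ F[D]^p) if and only if the leading coefficient matrix of G has full column rank. -/

import Mathlib

noncomputable section

/-- The column degree function of a univariate polynomial matrix `G` (with no zero
columns): `a j = deg` of the `j`-th column `= max_i deg (G i j)`. -/
def colDeg1 {F : Type} [Field F] {q p : ℕ}
    (G : Matrix (Fin q) (Fin p) (Polynomial F)) (j : Fin p) : ℕ :=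
  Finset.univ.sup fun i => (G i j).natDegree

/-- The leading coefficient matrix of `G`: its `j`-th column consists of the
coefficients of `D^{a j}` in the `j`-th column of `G`. -/
def leadCoeffMatrix {F : Type} [Field F] {q p : ℕ}
    (G : Matrix (Fin q) (Fin p) (Polynomial F)) : Matrix (Fin q) (Fin p) F :=
  fun i j => (G i j).coeff (colDeg1 G j)

lemma natDegree_le_colDeg1 {F : Type} [Field F] {q p : ℕ}
    (G : Matrix (Fin q) (Fin p) (Polynomial F)) (i : Fin q) (j : Fin p) :
    (G i j).natDegree ≤ colDeg1 G j :=
  Finset.le_sup (f := fun i => (G i j).natDegree) (Finset.mem_univ i)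

/-- Key computation: if every column contributes in degree at most `d`, the `d`-th
coefficient of `(G f) i` is `(L c) i` where `c j = (f j).coeff (d - a j)`. -/
lemma coeff_mulVec_eq {F : Type} [Field F] {q p : ℕ}
    (G : Matrix (Fin q) (Fin p) (Polynomial F)) (f : Fin p → Polynomial F) (d : ℕ)
    (h : ∀ j, ((colDeg1 G j : ℕ) : WithBot ℕ) + (f j).degree ≤ (d : WithBot ℕ))
    (i : Fin q) :
    ((G.mulVec f) i).coeff d =
      ∑ j, leadCoeffMatrix G i j * (f j).coeff (d - colDeg1 G j) := by
  simp only [Matrix.mulVec, dotProduct, Polynomial.finset_sum_coeff]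
  refine Finset.sum_congr rfl fun j _ => ?_
  by_cases hf : f j = 0
  · simp [hf]
  · have hdeg : (f j).degree = ((f j).natDegree : WithBot ℕ) :=
      Polynomial.degree_eq_natDegree hf
    have hd : colDeg1 G j + (f j).natDegree ≤ d := by
      have := h j
      rw [hdeg] at this
      exact_mod_cast this
    have h1 : (G i j).natDegree ≤ colDeg1 G j := natDegree_le_colDeg1 G i j
    have h2 : (f j).natDegree ≤ d - colDeg1 G j := by omega
    have h3 : d = colDeg1 G j + (d - colDeg1 G j) := by omega
    rw [h3, Polynomial.coeff_mul_add_eq_of_natDegree_le h1 h2]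
    simp [leadCoeffMatrix]

/-- Upper bound: the degree of each entry of `G f` is at most `max_j (a j + deg f j)`. -/
lemma degree_mulVec_le {F : Type} [Field F] {q p : ℕ}
    (G : Matrix (Fin q) (Fin p) (Polynomial F)) (f : Fin p → Polynomial F) (i : Fin q) :
    ((G.mulVec f) i).degree ≤
      Finset.univ.sup fun j => ((colDeg1 G j : ℕ) : WithBot ℕ) + (f j).degree := by
  simp only [Matrix.mulVec, dotProduct]
  refine le_trans (Polynomial.degree_sum_le _ _) ?_
  refine Finset.sup_mono_fun fun j _ => ?_
  refine le_trans (Polynomial.degree_mul_le _ _) ?_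
  refine add_le_add_left ?_ _
  refine le_trans (Polynomial.degree_le_natDegree) ?_
  exact_mod_cast natDegree_le_colDeg1 G i j

/-- Forney's theorem, `n = 1`: a polynomial matrix `G` with no zero
column has the predictable degree property — `deg (G f) = max_j (a j + deg f_j)` for
every `f`, degrees taken in `WithBot ℕ` so that `deg 0 = -∞` — if and only if its
leading coefficient matrix has full column rank (i.e. acts injectively on `F^p`). -/
theorem forney_PD_iff_leading_full_rank (F : Type) [Field F] (q p : ℕ)
    (G : Matrix (Fin q) (Fin p) (Polynomial F))
    (hnz : ∀ j, ∃ i, G i j ≠ 0) :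
    (∀ f : Fin p → Polynomial F,
        (Finset.univ.sup fun i => (G.mulVec f i).degree) =
          Finset.univ.sup fun j => ((colDeg1 G j : ℕ) : WithBot ℕ) + (f j).degree) ↔
      Function.Injective ((leadCoeffMatrix G).mulVec : (Fin p → F) → Fin q → F) := by
  set L := leadCoeffMatrix G with hL
  constructor
  · intro hPD
    -- injectivity via trivial kernel
    have key : ∀ c : Fin p → F, L.mulVec c = 0 → c = 0 := by
      intro c hc
      by_contra hcne
      obtain ⟨j0, hj0⟩ : ∃ j, c j ≠ 0 := by
        by_contra h
        push_neg at h
        exact hcne (funext h)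
      set N := Finset.univ.sup (colDeg1 G) with hN
      have haN : ∀ j, colDeg1 G j ≤ N := fun j => Finset.le_sup (Finset.mem_univ j)
      set f : Fin p → Polynomial F :=
        fun j => Polynomial.C (c j) * Polynomial.X ^ (N - colDeg1 G j) with hf
      -- each term of the RHS sup is ≤ N
      have hterm : ∀ j, ((colDeg1 G j : ℕ) : WithBot ℕ) + (f j).degree ≤ (N : WithBot ℕ) := by
        intro j
        by_cases hcj : c j = 0
        · simp [hf, hcj]
        · have : (f j).degree = ((N - colDeg1 G j : ℕ) : WithBot ℕ) := by
            simp [hf, Polynomial.degree_C_mul_X_pow _ hcj]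
          rw [this]
          have : colDeg1 G j + (N - colDeg1 G j) = N := by
            have := haN j; omega
          exact_mod_cast le_of_eq (by exact_mod_cast this)
      -- the RHS sup equals N
      have hRHS : (Finset.univ.sup fun j => ((colDeg1 G j : ℕ) : WithBot ℕ) + (f j).degree)
          = (N : WithBot ℕ) := by
        refine le_antisymm (Finset.sup_le fun j _ => hterm j) ?_
        have hdeg : (f j0).degree = ((N - colDeg1 G j0 : ℕ) : WithBot ℕ) := by
          simp [hf, Polynomial.degree_C_mul_X_pow _ hj0]
        have : ((colDeg1 G j0 : ℕ) : WithBot ℕ) + (f j0).degree = (N : WithBot ℕ) := by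
          rw [hdeg]
          have h1 : colDeg1 G j0 + (N - colDeg1 G j0) = N := by
            have := haN j0; omega
          exact_mod_cast congrArg (Nat.cast : ℕ → WithBot ℕ) h1
        calc (N : WithBot ℕ) = _ := this.symm
          _ ≤ _ := Finset.le_sup (f := fun j => ((colDeg1 G j : ℕ) : WithBot ℕ) + (f j).degree)
            (Finset.mem_univ j0)
      -- but every entry of G f has degree < N
      have hcoeff : ∀ i, ((G.mulVec f) i).coeff N = 0 := by
        intro i
        rw [coeff_mulVec_eq G f N hterm i]
        have : ∀ j, (f j).coeff (N - colDeg1 G j) = c j := by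
          intro j
          simp [hf, Polynomial.coeff_C_mul, Polynomial.coeff_X_pow]
        simp only [this]
        have := congrFun hc i
        simpa [Matrix.mulVec, dotProduct] using this
      have hlt : ∀ i, ((G.mulVec f) i).degree < (N : WithBot ℕ) := by
        intro i
        have hle : ((G.mulVec f) i).degree ≤ (N : WithBot ℕ) :=
          le_trans (degree_mulVec_le G f i) (by rw [hRHS])
        refine lt_of_le_of_ne hle ?_
        intro hEq
        have : ((G.mulVec f) i).coeff N ≠ 0 := by
          have hne : (G.mulVec f) i ≠ 0 := by
            intro h0
            rw [h0] at hEq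
            simp [Polynomial.degree_zero] at hEq
          have := Polynomial.coeff_ne_zero_of_eq_degree hEq
          exact this
        exact this (hcoeff i)
      have hsup_lt : (Finset.univ.sup fun i => (G.mulVec f i).degree) < (N : WithBot ℕ) := by
        rcases Nat.eq_zero_or_pos q with hq | hq
        · subst hq
          simp only [Finset.univ_eq_empty, Finset.sup_empty]
          exact lt_of_le_of_lt bot_le (by exact_mod_cast WithBot.bot_lt_coe N)
        · exact Finset.sup_lt_iff (by exact_mod_cast WithBot.bot_lt_coe N) |>.2
            fun i _ => hlt i
      rw [hPD f, hRHS] at hsup_lt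
      exact lt_irrefl _ hsup_lt
    intro x y hxy
    have : L.mulVec (x - y) = 0 := by
      rw [Matrix.mulVec_sub, hxy, sub_self]
    have := key _ this
    exact sub_eq_zero.mp this
  · intro hinj f
    refine le_antisymm (Finset.sup_le fun i _ => degree_mulVec_le G f i) ?_
    set R := Finset.univ.sup fun j => ((colDeg1 G j : ℕ) : WithBot ℕ) + (f j).degree with hR
    rcases eq_or_ne R ⊥ with hRb | hRb
    · rw [hRb]; exact bot_le
    · obtain ⟨d, hd⟩ : ∃ d : ℕ, R = (d : WithBot ℕ) := by
        cases hRc : R with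
        | bot => exact absurd hRc hRb
        | coe d => exact ⟨d, by norm_cast⟩
        
      have hbound : ∀ j, ((colDeg1 G j : ℕ) : WithBot ℕ) + (f j).degree ≤ (d : WithBot ℕ) := by
        intro j
        rw [← hd]
        exact Finset.le_sup (f := fun j => ((colDeg1 G j : ℕ) : WithBot ℕ) + (f j).degree)
          (Finset.mem_univ j)
      -- find a column attaining the sup
      have hpne : (Finset.univ : Finset (Fin p)).Nonempty := by
        by_contra hpe
        rw [Finset.not_nonempty_iff_eq_empty] at hpe
        rw [hR, hpe] at hd
        simp at hd
      obtain ⟨j0, _, hj0⟩ := Finset.exists_mem_eq_sup Finset.univ hpne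
        (fun j => ((colDeg1 G j : ℕ) : WithBot ℕ) + (f j).degree)
      rw [← hR, hd] at hj0
      have hfj0 : f j0 ≠ 0 := by
        intro h0
        rw [h0] at hj0
        simp at hj0
      have hdegj0 : colDeg1 G j0 + (f j0).natDegree = d := by
        rw [Polynomial.degree_eq_natDegree hfj0] at hj0
        exact_mod_cast hj0.symm
      set c : Fin p → F := fun j => (f j).coeff (d - colDeg1 G j) with hc
      have hcj0 : c j0 ≠ 0 := by
        have : d - colDeg1 G j0 = (f j0).natDegree := by omega
        simp only [hc, this]
        exact Polynomial.leadingCoeff_ne_zero.mpr hfj0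
      have hcne : c ≠ 0 := fun h => hcj0 (by rw [h]; rfl)
      have hLc : L.mulVec c ≠ 0 := by
        intro h
        apply hcne
        apply hinj
        rw [h, Matrix.mulVec_zero]
      obtain ⟨i0, hi0⟩ : ∃ i, L.mulVec c i ≠ 0 := by
        by_contra h
        push_neg at h
        exact hLc (funext h)
      have hco : ((G.mulVec f) i0).coeff d ≠ 0 := by
        rw [coeff_mulVec_eq G f d hbound i0]
        simpa [Matrix.mulVec, dotProduct] using hi0
      have : (d : WithBot ℕ) ≤ ((G.mulVec f) i0).degree :=
        Polynomial.le_degree_of_ne_zero hco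
      rw [hd]
      exact le_trans this (Finset.le_sup (f := fun i => (G.mulVec f i).degree)
        (Finset.mem_univ i0))
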